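/- arXiv:0706.2147 — 2 statements merged into one kernel-verified Lean document; each statement's English description precedes it below -/
import Mathlib

section
/- Equality of full and truncated s-expectations: Let γ ∈ {1,…,n} satisfy gcd(n, γ) = 1. Then for all sites i₁, …, iₙ ∈ Λ, the replica expectation of the product of n s-variables equals its truncated version: ⟨⟨ s^{(γ)}_{i₁} ⋯ s^{(γ)}_{iₙ} ⟩⟩_{Λ,β} = ⟨⟨ s^{(γ)}_{i₁} ⋯ s^{(γ)}_{iₙ} ⟩⟩^T_{Λ,β}. -/
open scoped BigOperators Classical
noncomputable section

namespace IsingReplica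

/-- Lattice sites in `ℤ^d`. -/
abbrev Site (d : ℕ) := Fin d → ℤ

/-- `i` and `j` are nearest neighbors: `|i - j| = 1`. -/
def nn {d : ℕ} (i j : Site d) : Prop := (∑ k, |i k - j k|) = 1

instance {d : ℕ} (i j : Site d) : Decidable (nn i j) :=
  inferInstanceAs (Decidable ((∑ k, |i k - j k|) = 1))

/-- The spin values `{+1, -1}`. -/
abbrev SpinVal : Type := ↥({1, -1} : Finset ℤ)

/-- Spin configurations on a finite volume `Λ`. -/
abbrev Config {d : ℕ} (Λ : Finset (Site d)) : Type := {x // x ∈ Λ} → SpinVal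

/-- The spin at a site, as a real number (extended by `+1` outside `Λ`). -/
def spin {d : ℕ} {Λ : Finset (Site d)} (σ : Config Λ) (i : Site d) : ℝ :=
  if h : i ∈ Λ then ((σ ⟨i, h⟩ : ℤ) : ℝ) else 1

/-- The boundary sites of `Λ`: sites whose unit cube shares a `(d-1)`-face with the
topological boundary of the union of the closed unit cubes of `Λ`; equivalently,
sites of `Λ` having a nearest neighbor outside `Λ`. -/
def latBoundary {d : ℕ} (Λ : Finset (Site d)) : Finset (Site d) :=
  Λ.filter fun i => ∃ j, nn i j ∧ j ∉ Λ

/-- `+1` boundary conditions. -/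
def PlusBC {d : ℕ} {Λ : Finset (Site d)} (σ : Config Λ) : Prop :=
  ∀ i (h : i ∈ Λ), i ∈ latBoundary Λ → ((σ ⟨i, h⟩ : ℤ) = 1)

/-- The Ising Hamiltonian `H_Λ(σ) = Σ_{⟨i,j⟩} (1 - σ_i σ_j)`, the sum over unordered
nearest-neighbor pairs written as half the sum over ordered pairs. -/
def HΛ {d : ℕ} {Λ : Finset (Site d)} (σ : Config Λ) : ℝ :=
  (1 / 2) * ∑ i : {x // x ∈ Λ}, ∑ j : {x // x ∈ Λ},
    if nn i.1 j.1 then 1 - spin σ i.1 * spin σ j.1 else 0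

/-- The partition function with `+1` boundary conditions. -/
def Z {d : ℕ} (Λ : Finset (Site d)) (β : ℝ) : ℝ :=
  ∑ σ : Config Λ, if PlusBC σ then Real.exp (-β * HΛ σ) else 0

/-- The Gibbs expectation `⟨f⟩_{Λ,β}` with `+1` boundary conditions. -/
def gibbsExp {d : ℕ} (Λ : Finset (Site d)) (β : ℝ) (f : Config Λ → ℝ) : ℝ :=
  (Z Λ β)⁻¹ * ∑ σ : Config Λ, if PlusBC σ then f σ * Real.exp (-β * HΛ σ) else 0

/-- The set partitions of `{0, …, m-1}`: families of nonempty blocks such that every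
element lies in exactly one block. -/
def partitions (m : ℕ) : Finset (Finset (Finset (Fin m))) :=
  Finset.univ.filter fun P =>
    (∀ B ∈ P, B.Nonempty) ∧ ∀ x : Fin m, ∃! B, B ∈ P ∧ x ∈ B

/-- The truncated (connected) correlation
`⟨σ_{j 0} ⋯ σ_{j (m-1)}⟩^T = Σ_𝒫 (-1)^(|𝒫|-1) (|𝒫|-1)! ∏_{B ∈ 𝒫} ⟨∏_{k ∈ B} σ_{j k}⟩`. -/
def truncCorr {d : ℕ} (Λ : Finset (Site d)) (β : ℝ) {m : ℕ} (j : Fin m → Site d) : ℝ :=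
  ∑ P ∈ partitions m,
    (-1 : ℝ) ^ (P.card - 1) * (Nat.factorial (P.card - 1) : ℝ) *
      ∏ B ∈ P, gibbsExp Λ β fun σ => ∏ k ∈ B, spin σ (j k)

/-- `n`-replica configurations on `Λ`. -/
abbrev RConfig {d : ℕ} (Λ : Finset (Site d)) (n : ℕ) : Type :=
  {x // x ∈ Λ} → Fin n → SpinVal

/-- The replica component `σ^{(α)}` (the index `a : Fin n` encodes `α = a + 1`). -/
def comp {d n : ℕ} {Λ : Finset (Site d)} (σv : RConfig Λ n) (a : Fin n) : Config Λ :=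
  fun i => σv i a

/-- `+1` boundary conditions in every replica component. -/
def RPlusBC {d n : ℕ} {Λ : Finset (Site d)} (σv : RConfig Λ n) : Prop :=
  ∀ a, PlusBC (comp σv a)

/-- The replica Hamiltonian `H_rep(σ⃗) = Σ_α H_Λ(σ^{(α)})`. -/
def Hrep {d n : ℕ} {Λ : Finset (Site d)} (σv : RConfig Λ n) : ℝ :=
  ∑ a, HΛ (comp σv a)

/-- The spin of the replica component `α = a + 1` at site `i`. -/
def rspin {d n : ℕ} {Λ : Finset (Site d)} (σv : RConfig Λ n) (a : Fin n) (i : Site d) : ℝ :=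
  spin (comp σv a) i

/-- `ω = e^{2πi/n}`, the primitive `n`-th root of unity. -/
def rootn (n : ℕ) : ℂ := Complex.exp (2 * Real.pi * Complex.I / n)

/-- The replica Fourier variables
`s_i^{(γ)}(σ⃗) = n^{-1/2} Σ_{α'=1}^n ω^{γ(α'-1)} σ_i^{(α')}`
(the summation index `a : Fin n` encodes `α' = a + 1`). -/
def sVar {d n : ℕ} {Λ : Finset (Site d)} (γ : ℕ) (σv : RConfig Λ n) (i : Site d) : ℂ :=
  (Real.sqrt n : ℂ)⁻¹ * ∑ a : Fin n, rootn n ^ (γ * (a : ℕ)) * (rspin σv a i : ℂ)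

/-- The replica expectation `⟨⟨F⟩⟩_{Λ,β} = Z^{-n} Σ_{σ⃗} F(σ⃗) e^{-β H_rep(σ⃗)}`. -/
def rExp {d : ℕ} (Λ : Finset (Site d)) (β : ℝ) (n : ℕ) (F : RConfig Λ n → ℂ) : ℂ :=
  ((Z Λ β ^ n : ℝ) : ℂ)⁻¹ *
    ∑ σv : RConfig Λ n,
      if RPlusBC σv then F σv * Complex.exp (-(β : ℂ) * (Hrep σv : ℂ)) else 0

/-- The truncated replica expectation of `m` factors, defined by the partition formula. -/
def rTrunc {d : ℕ} (Λ : Finset (Site d)) (β : ℝ) (n : ℕ) {m : ℕ}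
    (F : Fin m → RConfig Λ n → ℂ) : ℂ :=
  ∑ P ∈ partitions m,
    (-1 : ℂ) ^ (P.card - 1) * (Nat.factorial (P.card - 1) : ℂ) *
      ∏ B ∈ P, rExp Λ β n fun σv => ∏ k ∈ B, F k σv

/-- Connectivity of `a` and `b` by a nearest-neighbor path inside the set `X`. -/
def connIn {d : ℕ} (X : Finset (Site d)) (a b : Site d) : Prop :=
  Relation.ReflTransGen (fun x y => x ∈ X ∧ y ∈ X ∧ nn x y) a b

/-- The sites of `Λ` where all replica components equal `+1`. -/
def onesSet {d n : ℕ} {Λ : Finset (Site d)} (σv : RConfig Λ n) : Finset (Site d) :=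
  Λ.filter fun i => ∀ h : i ∈ Λ, ∀ a, ((σv ⟨i, h⟩ a : ℤ) = 1)

/-- The replica sea: the part of the all-ones set connected to the boundary `∂Λ`. -/
def sea {d n : ℕ} {Λ : Finset (Site d)} (σv : RConfig Λ n) : Finset (Site d) :=
  (onesSet σv).filter fun i => ∃ j ∈ latBoundary Λ, connIn (onesSet σv) j i

/-- `K` is a continent of `σ⃗`: a connected component of `Λ \ 𝒮(σ⃗)`. -/
def IsContinent {d n : ℕ} {Λ : Finset (Site d)} (σv : RConfig Λ n)
    (K : Finset (Site d)) : Prop :=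
  K.Nonempty ∧ K ⊆ Λ \ sea σv ∧
    (∀ a ∈ K, ∀ b ∈ K, connIn (Λ \ sea σv) a b) ∧
    (∀ a ∈ K, ∀ b ∈ Λ \ sea σv, connIn (Λ \ sea σv) a b → b ∈ K)

/-- The local cyclic replica transformation `π_𝒦`: on sites of `K` it cyclically shifts
the replica index (`(π_𝒦 σ⃗)_i^{(α)} = σ_i^{(α-1)}`, indices mod `n`), elsewhere it is
the identity. -/
def piK {d n : ℕ} {Λ : Finset (Site d)} (K : Finset (Site d)) (σv : RConfig Λ n) :
    RConfig Λ n :=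
  fun i a => if (i : Site d) ∈ K then σv i ⟨((a : ℕ) + n - 1) % n, Nat.mod_lt _ a.pos⟩ else σv i a

/-- The length of the shortest tree connecting the sites `i 0, …, i (m-1)`:
the minimal number of edges of a connected subgraph of the nearest-neighbor graph
on `ℤ^d` whose vertex set contains all the given sites. -/
def treeLen {d m : ℕ} (i : Fin m → Site d) : ℕ :=
  sInf {r : ℕ | ∃ E : Finset (Site d × Site d),
    E.card = r ∧ (∀ e ∈ E, nn e.1 e.2) ∧
    ∀ x ∈ Finset.univ.image i ∪ E.image Prod.fst ∪ E.image Prod.snd,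
      ∀ y ∈ Finset.univ.image i ∪ E.image Prod.fst ∪ E.image Prod.snd,
        Relation.ReflTransGen (fun a b => (a, b) ∈ E ∨ (b, a) ∈ E) x y}

/-- A face: the common `(d-1)`-face of the unit cubes centered at `c` and `c + e_k`,
encoded by the pair `(c, k)`. -/
abbrev Face (d : ℕ) := Site d × Fin d

/-- The face `(c, k)` as a subset of `ℝ^d`. -/
def faceSet {d : ℕ} (F : Face d) : Set (Fin d → ℝ) :=
  {x | x F.2 = (F.1 F.2 : ℝ) + 1 / 2 ∧ ∀ j, j ≠ F.2 → |x j - (F.1 j : ℝ)| ≤ 1 / 2}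

/-- Two faces are adjacent if they are distinct and their intersection contains a
`(d-2)`-dimensional unit cube. -/
def adjFace {d : ℕ} (F F' : Face d) : Prop :=
  F ≠ F' ∧ ∃ j₁ j₂ : Fin d, j₁ ≠ j₂ ∧ ∃ z : Fin d → ℝ,
    {x : Fin d → ℝ | x j₁ = z j₁ ∧ x j₂ = z j₂ ∧
        ∀ j, j ≠ j₁ → j ≠ j₂ → z j ≤ x j ∧ x j ≤ z j + 1} ⊆ faceSet F ∩ faceSet F'

/-- Connectivity of faces by a chain of adjacent faces inside `Y`. -/
def faceConnIn {d : ℕ} (Y : Finset (Face d)) (A B : Face d) : Prop :=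
  Relation.ReflTransGen (fun x y => x ∈ Y ∧ y ∈ Y ∧ adjFace x y) A B

/-- A connected surface. -/
def SurfConnected {d : ℕ} (Y : Finset (Face d)) : Prop :=
  ∀ F ∈ Y, ∀ F' ∈ Y, faceConnIn Y F F'

/-- The `k`-th coordinate unit vector. -/
def unitVec {d : ℕ} (k : Fin d) : Site d := fun j => if j = k then 1 else 0

/-- The broken faces of a spin configuration: common faces of nearest-neighbor pairs
in `Λ` whose spins differ. -/
def brokenFaces {d : ℕ} {Λ : Finset (Site d)} (σ : Config Λ) : Finset (Face d) :=
  (Λ ×ˢ (Finset.univ : Finset (Fin d))).filter fun F =>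
    F.1 + unitVec F.2 ∈ Λ ∧ spin σ F.1 ≠ spin σ (F.1 + unitVec F.2)

/-- The faces forming the topological boundary of the union of the unit cubes of `K`. -/
def bFaces {d : ℕ} (K : Finset (Site d)) : Finset (Face d) :=
  ((K ×ˢ (Finset.univ : Finset (Fin d))).filter fun F => F.1 + unitVec F.2 ∉ K) ∪
    (((K ×ˢ (Finset.univ : Finset (Fin d))).image fun F => (F.1 - unitVec F.2, F.2)).filter
      fun F => F.1 ∉ K)

/-- The component `C^{(α)}(𝒦, σ⃗)` of the replica continent contour: the union of
those contours (connected components of broken faces) of `σ^{(α)}` sharing at least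
one face with `∂𝒦`. -/
def contContour {d n : ℕ} {Λ : Finset (Site d)} (σv : RConfig Λ n) (K : Finset (Site d))
    (a : Fin n) : Finset (Face d) :=
  (brokenFaces (comp σv a)).filter fun F =>
    ∃ F₀ ∈ brokenFaces (comp σv a), F₀ ∈ bFaces K ∧ faceConnIn (brokenFaces (comp σv a)) F₀ F

/-- `C(𝒦)`: the set of replica continent contours `C⃗(𝒦, σ⃗)` as `σ⃗` ranges over
`n`-replica configurations (with `+1` boundary conditions) having `𝒦` as a continent. -/
def contourSet {d : ℕ} (Λ : Finset (Site d)) (n : ℕ) (K : Finset (Site d)) :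
    Set (Fin n → Finset (Face d)) :=
  {C | ∃ σv : RConfig Λ n, RPlusBC σv ∧ IsContinent σv K ∧ ∀ a, C a = contContour σv K a}


section Aux

variable {d n : ℕ} {Λ : Finset (Site d)} [NeZero n]

/-- Cyclic shift of the replica index. -/
def shiftE : RConfig Λ n ≃ RConfig Λ n where
  toFun σv := fun i a => σv i (a + 1)
  invFun σv := fun i a => σv i (a - 1)
  left_inv σv := by funext i a; simp
  right_inv σv := by funext i a; simp

lemma pow_mod_eq {ζ : ℂ} (hζ : ζ ^ n = 1) (k : ℕ) : ζ ^ k = ζ ^ (k % n) := by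
  conv_lhs => rw [← Nat.div_add_mod k n]
  rw [pow_add, pow_mul, hζ, one_pow, one_mul]

lemma pow_congr_mod {ζ : ℂ} (hζ : ζ ^ n = 1) {x y : ℕ} (h : x % n = y % n) :
    ζ ^ x = ζ ^ y := by rw [pow_mod_eq hζ x, pow_mod_eq hζ y, h]

lemma rootn_pow_n : rootn n ^ n = 1 :=
  (Complex.isPrimitiveRoot_exp n (NeZero.ne n)).pow_eq_one

lemma sVar_shiftE (γ : ℕ) (σv : RConfig Λ n) (i : Site d) :
    rootn n ^ γ * sVar γ (shiftE σv) i = sVar γ σv i := by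
  have hζn : rootn n ^ n = 1 := rootn_pow_n
  have hrs : ∀ a : Fin n, rspin (shiftE σv) a i = rspin σv (a + 1) i := fun a => rfl
  have hsum : ∑ a : Fin n, rootn n ^ γ * (rootn n ^ (γ * (a : ℕ)) * (rspin σv (a + 1) i : ℂ))
      = ∑ a : Fin n, rootn n ^ (γ * (a : ℕ)) * (rspin σv a i : ℂ) := by
    apply Fintype.sum_equiv (Equiv.addRight (1 : Fin n))
    intro a
    have hv : ((a + 1 : Fin n) : ℕ) % n = ((a : ℕ) + 1) % n := by
      rw [Fin.val_add, Fin.val_one', Nat.mod_mod, Nat.add_mod, Nat.mod_mod, ← Nat.add_mod]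
    have hpow : rootn n ^ (γ + γ * (a : ℕ)) = rootn n ^ (γ * (((a + 1 : Fin n)) : ℕ)) := by
      apply pow_congr_mod hζn
      have : (γ * (((a + 1 : Fin n)) : ℕ)) % n = (γ * ((a : ℕ) + 1)) % n := by
        conv_lhs => rw [Nat.mul_mod, hv, ← Nat.mul_mod]
      rw [this]
      congr 1
      ring
    simp only [Equiv.coe_addRight, ← mul_assoc, ← pow_add, hpow]
  simp only [sVar, hrs]
  rw [mul_left_comm]
  congr 1
  rw [Finset.mul_sum]
  exact hsum

lemma RPlusBC_shiftE {σv : RConfig Λ n} : RPlusBC (shiftE σv) ↔ RPlusBC σv := by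
  constructor
  · intro h a
    have := h (a - 1)
    have hrw : (a - 1) + 1 = a := sub_add_cancel a 1
    show PlusBC (comp σv a)
    rw [← hrw]
    exact this
  · intro h a
    exact h (a + 1)

lemma Hrep_shiftE (σv : RConfig Λ n) : Hrep (shiftE σv) = Hrep σv := by
  unfold Hrep
  exact Fintype.sum_equiv (Equiv.addRight 1) _ _ (fun a => rfl)

lemma rExp_block_zero (β : ℝ) (γ : ℕ) (B : Finset (Fin n)) (i : Fin n → Site d)
    (hnd : ¬ (n ∣ γ * B.card)) :
    rExp Λ β n (fun σv => ∏ k ∈ B, sVar γ σv (i k)) = 0 := by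
  classical
  have hζn : rootn n ^ n = 1 := rootn_pow_n
  have hζ1 : rootn n ^ (γ * B.card) ≠ 1 := by
    intro h
    exact hnd (((Complex.isPrimitiveRoot_exp n (NeZero.ne n)).pow_eq_one_iff_dvd _).mp h)
  set f : RConfig Λ n → ℂ := fun σv =>
    if RPlusBC σv then (∏ k ∈ B, sVar γ σv (i k)) * Complex.exp (-(β : ℂ) * (Hrep σv : ℂ))
    else 0 with hf
  have hprod : ∀ σv : RConfig Λ n,
      rootn n ^ (γ * B.card) * ∏ k ∈ B, sVar γ (shiftE σv) (i k)
        = ∏ k ∈ B, sVar γ σv (i k) := by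
    intro σv
    have h1 : ∏ k ∈ B, sVar γ σv (i k)
        = ∏ k ∈ B, (rootn n ^ γ * sVar γ (shiftE σv) (i k)) :=
      Finset.prod_congr rfl fun k _ => (sVar_shiftE γ σv (i k)).symm
    rw [h1, Finset.prod_mul_distrib, Finset.prod_const, ← pow_mul]
  have hterm : ∀ σv, rootn n ^ (γ * B.card) * f (shiftE σv) = f σv := by
    intro σv
    by_cases hbc : RPlusBC σv
    · have hbc' : RPlusBC (shiftE σv) := RPlusBC_shiftE.mpr hbc
      simp only [hf, if_pos hbc, if_pos hbc', Hrep_shiftE]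
      rw [← mul_assoc, hprod]
    · have hbc' : ¬ RPlusBC (shiftE σv) := fun h => hbc (RPlusBC_shiftE.mp h)
      simp only [hf, if_neg hbc, if_neg hbc', mul_zero]
  have hS : ∑ σv : RConfig Λ n, f σv = 0 := by
    have h1 : ∑ σv : RConfig Λ n, f σv = ∑ σv : RConfig Λ n, f (shiftE σv) :=
      (Equiv.sum_comp shiftE f).symm
    have h2 : rootn n ^ (γ * B.card) * ∑ σv : RConfig Λ n, f σv
        = ∑ σv : RConfig Λ n, f σv := by
      conv_lhs => rw [h1]
      rw [Finset.mul_sum]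
      exact Finset.sum_congr rfl fun σv _ => hterm σv
    by_contra hS0
    exact hζ1 (mul_right_cancel₀ hS0 (h2.trans (one_mul _).symm))
  have hrfl : rExp Λ β n (fun σv => ∏ k ∈ B, sVar γ σv (i k))
      = ((Z Λ β ^ n : ℝ) : ℂ)⁻¹ * ∑ σv : RConfig Λ n, f σv := rfl
  rw [hrfl, hS, mul_zero]

end Aux

/-- **Equality of full and truncated `s`-expectations.** If `γ ∈ {1, …, n}` with
`gcd(n, γ) = 1`, then for all sites `i 0, …, i (n-1) ∈ Λ`,
`⟨⟨ s^{(γ)}_{i 0} ⋯ s^{(γ)}_{i (n-1)} ⟩⟩_{Λ,β} = ⟨⟨ s^{(γ)}_{i 0} ⋯ s^{(γ)}_{i (n-1)} ⟩⟩^T_{Λ,β}`. -/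
theorem full_equals_truncated_s_expectation (d : ℕ) (hd : 2 ≤ d)
    (Λ : Finset (Site d)) (β : ℝ) (hβ : 0 < β) (n : ℕ) (hn : 1 ≤ n)
    (γ : ℕ) (hγ1 : 1 ≤ γ) (hγn : γ ≤ n) (hgcd : Nat.gcd n γ = 1)
    (i : Fin n → Site d) (hi : ∀ k, i k ∈ Λ) :
    rExp Λ β n (fun σv => ∏ k, sVar γ σv (i k)) =
      rTrunc Λ β n (fun k σv => sVar γ σv (i k)) := by
  classical
  haveI : NeZero n := ⟨by omega⟩
  have huniv_mem : ({Finset.univ} : Finset (Finset (Fin n))) ∈ partitions n := by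
    simp only [partitions, Finset.mem_filter, Finset.mem_univ, true_and]
    refine ⟨?_, ?_⟩
    · intro B hB
      rw [Finset.mem_singleton] at hB
      subst hB
      exact ⟨⟨0, by omega⟩, Finset.mem_univ _⟩
    · intro x
      exact ⟨Finset.univ, ⟨Finset.mem_singleton_self _, Finset.mem_univ x⟩,
        fun B hB => Finset.mem_singleton.mp hB.1⟩
  unfold rTrunc
  rw [Finset.sum_eq_single ({Finset.univ} : Finset (Finset (Fin n)))]
  · simp only [Finset.card_singleton, Nat.sub_self, pow_zero, Nat.factorial_zero,
      Nat.cast_one, mul_one, one_mul, Finset.prod_singleton]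
  · intro P hP hne
    simp only [partitions, Finset.mem_filter, Finset.mem_univ, true_and] at hP
    obtain ⟨h1, h2⟩ := hP
    obtain ⟨B, ⟨hBP, _⟩, _⟩ := h2 ⟨0, by omega⟩
    have hBne : B ≠ Finset.univ := by
      intro hBu
      apply hne
      apply Finset.eq_singleton_iff_unique_mem.mpr
      refine ⟨hBu ▸ hBP, ?_⟩
      intro B' hB'
      obtain ⟨y, hy⟩ := h1 B' hB'
      obtain ⟨By, _, huy⟩ := h2 y
      have e1 : B' = By := huy B' ⟨hB', hy⟩
      have e2 : Finset.univ = By := huy Finset.univ ⟨hBu ▸ hBP, Finset.mem_univ y⟩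
      rw [e1, ← e2]
    have hlt : B.card < n := by
      have := Finset.card_lt_card (Finset.ssubset_univ_iff.mpr hBne)
      simpa using this
    have hpos : 0 < B.card := Finset.card_pos.mpr (h1 B hBP)
    have hnd : ¬ (n ∣ γ * B.card) := by
      intro hdvd
      have hcop : Nat.Coprime n γ := hgcd
      have : n ∣ B.card := hcop.dvd_of_dvd_mul_left hdvd
      have := Nat.le_of_dvd hpos this
      omega
    rw [Finset.prod_eq_zero hBP (rExp_block_zero β γ B i hnd), mul_zero]
  · intro h
    exact absurd huniv_mem h
end IsingReplica
end
end

section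
/- Local cyclic replica symmetry on continents: Let σ⃗ be an n-replica configuration with +1 boundary conditions and let 𝒦 ∈ 𝒦(σ⃗) be one of its continents. Then the local cyclic replica transformation π_𝒦 preserves the sea and the continents, i.e. 𝒮(π_𝒦 σ⃗) = 𝒮(σ⃗) and 𝒦(π_𝒦 σ⃗) = 𝒦(σ⃗), and it preserves the energy: H_rep(π_𝒦 σ⃗) = H_rep(σ⃗). -/
open scoped BigOperators Classical
noncomputable section

namespace IsingReplica

section Aux
variable {d n : ℕ} {Λ : Finset (Site d)}

/-- The cyclic shift used in `piK`. -/
def rot {n : ℕ} (a : Fin n) : Fin n :=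
  ⟨((a : ℕ) + n - 1) % n, Nat.mod_lt _ a.pos⟩

lemma rot_inv (a : Fin n) : ((((a : ℕ) + n - 1) % n + 1) % n) = (a : ℕ) := by
  have hpos := a.pos
  have h1 : ((a : ℕ) + n - 1) + 1 = (a : ℕ) + n := by omega
  rw [Nat.mod_add_mod, h1, Nat.add_mod_right, Nat.mod_eq_of_lt a.isLt]

lemma rot_bijective : Function.Bijective (rot : Fin n → Fin n) := by
  rw [← Finite.injective_iff_bijective]
  intro a b h
  have := congrArg (fun x : Fin n => ((x : ℕ) + 1) % n) h
  simpa only [rot, rot_inv, Fin.ext_iff] using this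

lemma onesSet_piK (σv : RConfig Λ n) (K : Finset (Site d)) :
    onesSet (piK K σv) = onesSet σv := by
  ext i
  simp only [onesSet, Finset.mem_filter, and_congr_right_iff]
  intro hi
  constructor
  · intro h hh a
    by_cases hk : i ∈ K
    · obtain ⟨b, hb⟩ := (rot_bijective (n := n)).2 a
      have := h hh b
      simpa [piK, hk, rot, ← hb] using this
    · simpa [piK, hk] using h hh a
  · intro h hh a
    by_cases hk : i ∈ K
    · simpa [piK, hk, rot] using h hh (rot a)
    · simpa [piK, hk] using h hh a

lemma sea_piK (σv : RConfig Λ n) (K : Finset (Site d)) :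
    sea (piK K σv) = sea σv := by
  unfold sea
  rw [onesSet_piK]

lemma spin_piK (σv : RConfig Λ n) (K : Finset (Site d)) (a : Fin n) (i : Site d) :
    spin (comp (piK K σv) a) i =
      if i ∈ K then spin (comp σv (rot a)) i else spin (comp σv a) i := by
  unfold spin comp piK rot
  by_cases h : i ∈ Λ <;> by_cases hk : i ∈ K <;> simp [h, hk]

lemma sea_spin_one (σv : RConfig Λ n) {j : Site d} (hj : j ∈ sea σv) (a : Fin n) :
    spin (comp σv a) j = 1 := by
  have hj' : j ∈ onesSet σv := (Finset.mem_filter.mp hj).1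
  rw [onesSet, Finset.mem_filter] at hj'
  unfold spin comp
  rw [dif_pos hj'.1]
  exact_mod_cast congrArg (fun z : ℤ => (z : ℝ)) (hj'.2 hj'.1 a)

end Aux

/-- **Local cyclic replica symmetry on continents.** If `σ⃗` has `+1` boundary
conditions and `𝒦 ∈ 𝒦(σ⃗)` is one of its continents, then `π_𝒦` preserves the sea,
the continents, and the energy. -/
theorem local_cyclic_replica_symmetry (d : ℕ) (hd : 2 ≤ d)
    (Λ : Finset (Site d)) (n : ℕ) (hn : 1 ≤ n)
    (σv : RConfig Λ n) (hbc : RPlusBC σv) (K : Finset (Site d)) (hK : IsContinent σv K) :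
    sea (piK K σv) = sea σv ∧
      (∀ K' : Finset (Site d), IsContinent (piK K σv) K' ↔ IsContinent σv K') ∧
      Hrep (piK K σv) = Hrep σv := by
  have hsea : sea (piK K σv) = sea σv := sea_piK σv K
  refine ⟨hsea, fun K' => by simp only [IsContinent, hsea], ?_⟩
  -- neighbors of K outside K (inside Λ) are in the sea
  have hnbr : ∀ i ∈ K, ∀ j : Site d, j ∈ Λ → j ∉ K → nn i j → j ∈ sea σv := by
    intro i hi j hjΛ hjK hnn
    by_contra hjs
    have hiS : i ∈ Λ \ sea σv := hK.2.1 hi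
    have hjS : j ∈ Λ \ sea σv := Finset.mem_sdiff.mpr ⟨hjΛ, hjs⟩
    exact hjK (hK.2.2.2 i hi j hjS (Relation.ReflTransGen.single ⟨hiS, hjS, hnn⟩))
  -- energy
  unfold Hrep HΛ
  rw [← Finset.mul_sum, ← Finset.mul_sum, Finset.sum_comm (γ := Fin n),
    Finset.sum_comm (γ := Fin n)]
  congr 1
  refine Finset.sum_congr rfl fun i _ => ?_
  rw [Finset.sum_comm, Finset.sum_comm (γ := Fin n)]
  refine Finset.sum_congr rfl fun j _ => ?_
  by_cases hnn : nn i.1 j.1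
  · simp only [if_pos hnn, Finset.sum_sub_distrib]
    congr 1
    -- sum over replicas of products of spins is invariant
    by_cases hiK : i.1 ∈ K <;> by_cases hjK : j.1 ∈ K
    · rw [Fintype.sum_bijective rot rot_bijective _
        (fun a => spin (comp σv a) i.1 * spin (comp σv a) j.1)
        (fun a => by rw [spin_piK, spin_piK, if_pos hiK, if_pos hjK])]
    · have hone : ∀ a : Fin n, spin (comp σv a) j.1 = 1 := fun a =>
        sea_spin_one σv (hnbr i.1 hiK j.1 j.2 hjK hnn) a
      rw [Fintype.sum_bijective rot rot_bijective _
        (fun a => spin (comp σv a) i.1 * spin (comp σv a) j.1)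
        (fun a => by simp only [spin_piK, if_pos hiK, if_neg hjK, hone])]
    · have hnn' : nn j.1 i.1 := by
        unfold nn at hnn ⊢
        rw [← hnn]
        exact Finset.sum_congr rfl fun k _ => abs_sub_comm _ _
      have hone : ∀ a : Fin n, spin (comp σv a) i.1 = 1 := fun a =>
        sea_spin_one σv (hnbr j.1 hjK i.1 i.2 hiK hnn') a
      rw [Fintype.sum_bijective rot rot_bijective _
        (fun a => spin (comp σv a) i.1 * spin (comp σv a) j.1)
        (fun a => by simp only [spin_piK, if_neg hiK, if_pos hjK, hone])]
    · exact Finset.sum_congr rfl fun a _ => by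
        rw [spin_piK, spin_piK, if_neg hiK, if_neg hjK]
  · simp [hnn]

end IsingReplica
end
end
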